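/- Let q ≥ 2, p = q − 1, and let a_1,…,a_p, b_1,…,b_q be positive reals. Suppose d = min_{1≤i≤q} [e_i(b_1,…,b_q) − e_i(a_1,…,a_p)] / e_{i-1}(a_1,…,a_p) is positive (conventions e_0 = 1, e_q(a) = 0). Then for every n ≥ 1, f_n (d)_n ≤ 1 where f_n = ∏_{i=1}^p (a_i)_n / ∏_{i=1}^q (b_i)_n, and consequently for all x ≥ 0, {q-1}F{q}(a;b;x) ≤ 0F1(-;d;x). -/

import Mathlib

open Finset Real MeasureTheory

noncomputable def rise (a : ℝ) (n : ℕ) : ℝ := ∏ k ∈ Finset.range n, (a + k)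

noncomputable def esym {q : ℕ} (k : ℕ) (a : Fin q → ℝ) : ℝ :=
  ∑ s ∈ Finset.powersetCard k (Finset.univ : Finset (Fin q)), ∏ i ∈ s, a i

lemma esym_expand (m : ℕ) (c : Fin m → ℝ) (x : ℝ) :
    ∏ i, (c i + x) = ∑ k ∈ Finset.range (m+1), esym k c * x ^ (m - k) := by
  rw [Finset.prod_add, Finset.sum_powerset]
  rw [show #(univ : Finset (Fin m)) = m by simp]
  refine Finset.sum_congr rfl fun k hk => ?_
  rw [esym, Finset.sum_mul]
  refine Finset.sum_congr rfl fun t ht => ?_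
  rw [Finset.prod_const]
  congr 1
  rw [Finset.card_sdiff_of_subset (Finset.subset_univ t)]
  simp [(Finset.mem_powersetCard.mp ht).2]

lemma rise_pos {a : ℝ} (ha : 0 < a) (n : ℕ) : 0 < rise a n :=
  Finset.prod_pos fun k _ => by positivity

theorem stmt8 (q : ℕ) (hq : 2 ≤ q) (a : Fin (q - 1) → ℝ) (b : Fin q → ℝ)
    (ha : ∀ i, 0 < a i) (hb : ∀ i, 0 < b i) (d : ℝ)
    (hd : IsLeast {y : ℝ | ∃ i : ℕ, 1 ≤ i ∧ i ≤ q ∧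
      y = (esym i b - esym i a) / esym (i - 1) a} d)
    (hdpos : 0 < d) :
    (∀ n : ℕ, 1 ≤ n →
      (∏ i, rise (a i) n) / (∏ i, rise (b i) n) * rise d n ≤ 1) ∧
    (∀ x : ℝ, 0 ≤ x →
      (∑' n : ℕ, (∏ i, rise (a i) n) / (∏ i, rise (b i) n) * x ^ n / (Nat.factorial n))
        ≤ ∑' n : ℕ, x ^ n / (rise d n * (Nat.factorial n))) := by
  obtain ⟨Q, rfl⟩ : ∃ Q, q = Q + 1 := ⟨q - 1, by omega⟩
  have hQ1 : Q + 1 - 1 = Q := rfl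
  -- positivity of esym k a for k ≤ Q
  have hesympos : ∀ k, k ≤ Q → 0 < esym k a := by
    intro k hk
    refine Finset.sum_pos (fun s _ => Finset.prod_pos fun i _ => ha i) ?_
    rw [Finset.powersetCard_nonempty]
    simp [hk]
  -- esym (Q+1) a = 0
  have hesymtop : esym (Q + 1) a = 0 := by
    rw [esym, Finset.powersetCard_eq_empty.mpr (by simp), Finset.sum_empty]
  -- key coefficient inequality
  have hcoef : ∀ k, k ≤ Q → esym (k+1) a + d * esym k a ≤ esym (k+1) b := by
    intro k hk
    have hmem : ((esym (k+1) b - esym (k+1) a) / esym (k+1-1) a) ∈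
        {y : ℝ | ∃ i : ℕ, 1 ≤ i ∧ i ≤ Q + 1 ∧
          y = (esym i b - esym i a) / esym (i - 1) a} := ⟨k+1, by omega, by omega, rfl⟩
    have hle := hd.2 hmem
    rw [show k + 1 - 1 = k from rfl, le_div_iff₀ (hesympos k hk)] at hle
    linarith
  -- polynomial comparison
  have hstep : ∀ x : ℝ, 0 ≤ x →
      (x + d) * ∏ i, (a i + x) ≤ ∏ i, (b i + x) := by
    intro x hx
    rw [esym_expand _ a x, esym_expand _ b x]
    simp only [Nat.add_sub_cancel]
    have hb' : ∑ k ∈ Finset.range (Q+1+1), esym k b * x ^ (Q+1-k)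
        = x ^ (Q+1) + ∑ k ∈ Finset.range (Q+1), esym (k+1) b * x ^ (Q-k) := by
      rw [Finset.sum_range_succ']
      rw [show esym 0 b = 1 by simp [esym]]
      simp only [Nat.succ_sub_succ, Nat.sub_zero, one_mul]
      ring
    rw [hb']
    have ha' : (x + d) * ∑ k ∈ Finset.range (Q+1), esym k a * x ^ (Q-k)
        = x ^ (Q+1) + ∑ k ∈ Finset.range (Q+1),
            (esym (k+1) a + d * esym k a) * x ^ (Q-k) := by
      rw [add_mul, Finset.mul_sum, Finset.mul_sum]
      have h1 : ∑ k ∈ Finset.range (Q+1), x * (esym k a * x ^ (Q-k))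
          = x ^ (Q+1) + ∑ k ∈ Finset.range (Q+1), esym (k+1) a * x ^ (Q-k) := by
        have : ∀ k ∈ Finset.range (Q+1), x * (esym k a * x ^ (Q-k))
            = esym k a * x ^ (Q+1-k) := by
          intro k hk
          rw [Finset.mem_range] at hk
          rw [show Q + 1 - k = (Q - k) + 1 by omega, pow_succ]
          ring
        rw [Finset.sum_congr rfl this, Finset.sum_range_succ']
        rw [show esym 0 a = 1 by simp [esym]]
        rw [Finset.sum_range_succ, hesymtop]
        simp only [Nat.succ_sub_succ, Nat.sub_zero, one_mul, zero_mul, add_zero]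
        ring
      rw [h1, add_assoc]
      congr 1
      rw [← Finset.sum_add_distrib]
      exact Finset.sum_congr rfl fun k _ => by ring
    rw [ha']
    refine add_le_add_right (Finset.sum_le_sum fun k hk => ?_) _
    have hk' : k ≤ Q := Nat.lt_succ_iff.mp (Finset.mem_range.mp hk)
    exact mul_le_mul_of_nonneg_right (hcoef k hk') (pow_nonneg hx _)
  -- rising factorial comparison
  have hkey : ∀ n : ℕ, rise d n * ∏ i, rise (a i) n ≤ ∏ i, rise (b i) n := by
    intro n
    induction n with
    | zero => simp [rise]
    | succ n ih =>
      have hra : ∀ (m : ℕ) (c : Fin m → ℝ),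
          ∏ i, rise (c i) (n+1) = (∏ i, rise (c i) n) * ∏ i, (c i + n) := by
        intro m c
        rw [← Finset.prod_mul_distrib]
        exact Finset.prod_congr rfl fun i _ => Finset.prod_range_succ _ _
      rw [hra _ a, hra _ b, show rise d (n+1) = rise d n * (d + n) from
        Finset.prod_range_succ _ _]
      have h2 := hstep n (by positivity)
      calc rise d n * (d + n) * ((∏ i, rise (a i) n) * ∏ i, (a i + n))
          = (rise d n * ∏ i, rise (a i) n) * ((n + d) * ∏ i, (a i + n)) := by ring
        _ ≤ (∏ i, rise (b i) n) * ∏ i, (b i + n) := by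
            refine mul_le_mul ih h2 ?_ ?_
            · have h3 : (0:ℝ) ≤ ∏ i, (a i + (n:ℝ)) :=
                Finset.prod_nonneg fun i _ => add_nonneg (ha i).le (Nat.cast_nonneg n)
              exact mul_nonneg (add_nonneg (Nat.cast_nonneg n) hdpos.le) h3
            · exact Finset.prod_nonneg fun i _ => (rise_pos (hb i) n).le
  have hbpos : ∀ n : ℕ, 0 < ∏ i, rise (b i) n :=
    fun n => Finset.prod_pos fun i _ => rise_pos (hb i) n
  have part1 : ∀ n : ℕ,
      (∏ i, rise (a i) n) / (∏ i, rise (b i) n) * rise d n ≤ 1 := by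
    intro n
    rw [div_mul_eq_mul_div, div_le_one (hbpos n), mul_comm]
    exact hkey n
  refine ⟨fun n _ => part1 n, fun x hx => ?_⟩
  -- series comparison
  have hdn : ∀ n, 0 < rise d n := rise_pos hdpos
  have hterm : ∀ n : ℕ,
      (∏ i, rise (a i) n) / (∏ i, rise (b i) n) * x ^ n / (Nat.factorial n)
        ≤ x ^ n / (rise d n * (Nat.factorial n)) := by
    intro n
    have h1 : (∏ i, rise (a i) n) / (∏ i, rise (b i) n) ≤ 1 / rise d n := by
      rw [le_div_iff₀ (hdn n)]
      exact part1 n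
    calc (∏ i, rise (a i) n) / (∏ i, rise (b i) n) * x ^ n / (Nat.factorial n)
        = ((∏ i, rise (a i) n) / (∏ i, rise (b i) n)) * (x ^ n / (Nat.factorial n)) := by
          ring
      _ ≤ (1 / rise d n) * (x ^ n / (Nat.factorial n)) := by
          exact mul_le_mul_of_nonneg_right h1
            (div_nonneg (pow_nonneg hx n) (Nat.cast_nonneg _))
      _ = x ^ n / (rise d n * (Nat.factorial n)) := by ring
  have htermnn : ∀ n : ℕ,
      0 ≤ (∏ i, rise (a i) n) / (∏ i, rise (b i) n) * x ^ n / (Nat.factorial n) := by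
    intro n
    have h1 : 0 < ∏ i, rise (a i) n := Finset.prod_pos fun i _ => rise_pos (ha i) n
    have h2 := hbpos n
    positivity
  -- summability of RHS
  set m : ℝ := min d 1 with hm
  have hmpos : 0 < m := lt_min hdpos one_pos
  have hrise_ge : ∀ n : ℕ, m ^ n ≤ rise d n := by
    intro n
    calc m ^ n = ∏ _k ∈ Finset.range n, m := by
          rw [Finset.prod_const, Finset.card_range]
      _ ≤ rise d n := ?_
    refine Finset.prod_le_prod (fun k _ => hmpos.le) fun k hk => ?_
    rcases Nat.eq_zero_or_pos k with rfl | hk'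
    · exact le_trans (min_le_left d 1) (by simp)
    · have : m ≤ 1 := min_le_right d 1
      have : (1:ℝ) ≤ k := by exact_mod_cast hk'
      have := hdpos
      linarith [min_le_right d 1]
  have hRsum : Summable (fun n : ℕ => x ^ n / (rise d n * (Nat.factorial n))) := by
    refine Summable.of_nonneg_of_le
      (fun n => div_nonneg (pow_nonneg hx n) (mul_nonneg (hdn n).le (Nat.cast_nonneg _)))
      (fun n => ?_)
      (((Real.summable_pow_div_factorial (x / m))).mul_left 1)
    have h1 : x ^ n / (rise d n * (Nat.factorial n)) ≤ x ^ n / (m ^ n * (Nat.factorial n)) := by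
      refine div_le_div_of_nonneg_left (pow_nonneg hx n)
        (mul_pos (pow_pos hmpos n) (Nat.cast_pos.mpr (Nat.factorial_pos n))) ?_
      exact mul_le_mul_of_nonneg_right (hrise_ge n) (Nat.cast_nonneg _)
    refine h1.trans (le_of_eq ?_)
    rw [one_mul, div_pow, div_div, mul_comm ((m:ℝ)^n)]
  have hLsum : Summable (fun n : ℕ =>
      (∏ i, rise (a i) n) / (∏ i, rise (b i) n) * x ^ n / (Nat.factorial n)) :=
    Summable.of_nonneg_of_le htermnn hterm hRsum
  exact Summable.tsum_le_tsum hterm hLsum hRsum
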